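/- Let β > 0, γ ∈ (1/2, 1) and a ∈ (0,1). For the preferential attachment kernel p(x,y) = β(min(x,y))^{−γ}(max(x,y))^{γ−1}, define the integral operator T on L²([a,1]) by (Tg)(x) = ∫_a^1 p(x,y) g(y) dy. Then for every g ∈ L²([a,1]), ‖Tg‖_{L²([a,1])} ≤ (β√2/(2γ−1))·a^{1/2−γ}·‖g‖_{L²([a,1])}. -/

import Mathlib

open MeasureTheory Real Set
open scoped ENNReal NNReal

/-- The preferential attachment kernel `p(x,y) = β (min x y)^{-γ} (max x y)^{γ-1}`. -/
noncomputable def paKernel (β γ : ℝ) (x y : ℝ) : ℝ :=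
  β * (min x y) ^ (-γ) * (max x y) ^ (γ - 1)

lemma rpow_integrableOn' (d : ℝ) {a : ℝ} (ha : 0 < a) :
    MeasureTheory.IntegrableOn (fun t : ℝ => t ^ d) (Set.Icc a 1) := by
  apply ContinuousOn.integrableOn_compact isCompact_Icc
  intro t ht
  exact (Real.continuousAt_rpow_const t d
    (Or.inl (ne_of_gt (lt_of_lt_of_le ha ht.1)))).continuousWithinAt

lemma rpow_setIntegral' (d : ℝ) {a : ℝ} (ha : 0 < a) (ha1 : a ≤ 1) (hd : d ≠ -1) :
    ∫ t in Set.Icc a 1, t ^ d = (1 - a ^ (d + 1)) / (d + 1) := by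
  rw [MeasureTheory.integral_Icc_eq_integral_Ioc, ← intervalIntegral.integral_of_le ha1,
    integral_rpow (Or.inr ⟨hd, by
      rw [Set.uIcc_of_le ha1]; rintro ⟨h1, h2⟩; linarith⟩), Real.one_rpow]

lemma paKernel_nonneg {β γ x y : ℝ} (hβ : 0 ≤ β) (hx : 0 < x) (hy : 0 < y) :
    0 ≤ paKernel β γ x y := by
  unfold paKernel
  have h1 : 0 < min x y := lt_min hx hy
  have h2 : 0 < max x y := lt_max_of_lt_left hx
  positivity

lemma paKernel_sq_le (β γ : ℝ) {x y : ℝ} (hx : 0 < x) (hy : 0 < y) :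
    (paKernel β γ x y) ^ 2 ≤
      β ^ 2 * (x ^ (2 * γ - 2) * y ^ (-(2 * γ)) + x ^ (-(2 * γ)) * y ^ (2 * γ - 2)) := by
  have e1 : γ - 1 + (γ - 1) = 2 * γ - 2 := by ring
  have e2 : -γ + -γ = -(2 * γ) := by ring
  rcases le_total y x with h | h
  · rw [paKernel, min_eq_right h, max_eq_left h]
    have h1 : (β * y ^ (-γ) * x ^ (γ - 1)) ^ 2
        = β ^ 2 * ((x ^ (γ - 1) * x ^ (γ - 1)) * (y ^ (-γ) * y ^ (-γ))) := by ring
    rw [h1, ← Real.rpow_add hx, ← Real.rpow_add hy, e1, e2]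
    have h4 : 0 ≤ x ^ (-(2 * γ)) * y ^ (2 * γ - 2) :=
      mul_nonneg (Real.rpow_nonneg hx.le _) (Real.rpow_nonneg hy.le _)
    nlinarith [sq_nonneg β]
  · rw [paKernel, min_eq_left h, max_eq_right h]
    have h1 : (β * x ^ (-γ) * y ^ (γ - 1)) ^ 2
        = β ^ 2 * ((x ^ (-γ) * x ^ (-γ)) * (y ^ (γ - 1) * y ^ (γ - 1))) := by ring
    rw [h1, ← Real.rpow_add hx, ← Real.rpow_add hy, e1, e2]
    have h4 : 0 ≤ x ^ (2 * γ - 2) * y ^ (-(2 * γ)) :=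
      mul_nonneg (Real.rpow_nonneg hx.le _) (Real.rpow_nonneg hy.le _)
    nlinarith [sq_nonneg β]

lemma paKernel_measurable (β γ x : ℝ) :
    Measurable fun y => paKernel β γ x y := by
  unfold paKernel
  exact (measurable_const.mul ((measurable_const.min measurable_id).pow_const (-γ))).mul
    ((measurable_const.max measurable_id).pow_const (γ - 1))

/-- Operator norm bound for the integral operator with preferential attachment kernel
on `L²([a,1])`: `‖Tg‖₂ ≤ (β√2/(2γ-1)) a^{1/2-γ} ‖g‖₂`. -/
theorem stmt8 (β γ a : ℝ) (hβ : 0 < β) (hγ : γ ∈ Set.Ioo (1 / 2 : ℝ) 1)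
    (ha : a ∈ Set.Ioo (0 : ℝ) 1)
    (g : ℝ → ℝ) (hg : MemLp g 2 (volume.restrict (Set.Icc a 1))) :
    eLpNorm (fun x => ∫ y in Set.Icc a 1, paKernel β γ x y * g y) 2
        (volume.restrict (Set.Icc a 1))
      ≤ ENNReal.ofReal (β * Real.sqrt 2 / (2 * γ - 1) * a ^ (1 / 2 - γ)) *
        eLpNorm g 2 (volume.restrict (Set.Icc a 1)) := by
  obtain ⟨hγ1, hγ2⟩ := hγ
  obtain ⟨ha0, ha1⟩ := ha
  have h2γ : (0:ℝ) < 2 * γ - 1 := by linarith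
  set μ := volume.restrict (Set.Icc a 1) with hμ
  set A : ℝ := ∫ t in Set.Icc a 1, t ^ (2 * γ - 2) with hAdef
  set B : ℝ := ∫ t in Set.Icc a 1, t ^ (-(2 * γ)) with hBdef
  have hAval : A = (1 - a ^ (2 * γ - 1)) / (2 * γ - 1) := by
    rw [hAdef, rpow_setIntegral' _ ha0 ha1.le (by intro h; linarith),
      show 2 * γ - 2 + 1 = 2 * γ - 1 by ring]
  have hBval : B = (a ^ (1 - 2 * γ) - 1) / (2 * γ - 1) := by
    rw [hBdef, rpow_setIntegral' _ ha0 ha1.le (by intro h; nlinarith [h]),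
      show -(2 * γ) + 1 = 1 - 2 * γ by ring,
      div_eq_div_iff (by linarith) (by linarith)]
    ring
  have hA0 : 0 ≤ A := by
    rw [hAval]
    have : a ^ (2 * γ - 1) ≤ 1 := Real.rpow_le_one ha0.le ha1.le (by linarith)
    exact div_nonneg (by linarith) (by linarith)
  have haneg : (0:ℝ) < a ^ (1 - 2 * γ) := Real.rpow_pos_of_pos ha0 _
  have hB0 : 0 ≤ B := by
    rw [hBval]
    have h1 : (1:ℝ) ≤ a ^ (1 - 2 * γ) := by
      have := Real.rpow_le_rpow_of_exponent_ge ha0 ha1.le (show 1 - 2 * γ ≤ 0 by linarith)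
      rwa [Real.rpow_zero] at this
    exact div_nonneg (by linarith) (by linarith)
  have hAle : A ≤ 1 / (2 * γ - 1) := by
    rw [hAval]
    have : 0 ≤ a ^ (2 * γ - 1) := Real.rpow_nonneg ha0.le _
    exact (div_le_div_iff_of_pos_right h2γ).mpr (by linarith)
  have hBle : B ≤ a ^ (1 - 2 * γ) / (2 * γ - 1) := by
    rw [hBval]
    exact (div_le_div_iff_of_pos_right h2γ).mpr (by linarith)
  -- main chain
  have hg2 : AEMeasurable (fun y => (‖g y‖₊ : ℝ≥0∞)) μ := hg.1.enorm
  set G2 : ℝ≥0∞ := (∫⁻ y, (‖g y‖₊ : ℝ≥0∞) ^ (2:ℝ) ∂μ) ^ (1/2 : ℝ) with hG2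
  have hGeq : eLpNorm g 2 μ = G2 := by
    rw [eLpNorm_eq_lintegral_rpow_enorm_toReal (by norm_num) (by norm_num)]
    norm_num [hG2]
    rfl
  have hconj : Real.HolderConjugate 2 2 := Real.HolderConjugate.two_two
  -- pointwise (in x) bound after Cauchy-Schwarz
  have key : ∀ x ∈ Set.Icc a 1,
      (‖∫ y in Set.Icc a 1, paKernel β γ x y * g y‖₊ : ℝ≥0∞)
        ≤ ENNReal.ofReal (β ^ 2 * (x ^ (2*γ-2) * B) + β ^ 2 * (x ^ (-(2*γ)) * A)) ^ (1/2:ℝ)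
            * G2 := by
    intro x hx
    have hx0 : 0 < x := lt_of_lt_of_le ha0 hx.1
    have hA1 : (‖∫ y in Set.Icc a 1, paKernel β γ x y * g y‖₊ : ℝ≥0∞)
        ≤ ∫⁻ y, (‖paKernel β γ x y‖₊ : ℝ≥0∞) * (‖g y‖₊ : ℝ≥0∞) ∂μ := by
      refine (enorm_integral_le_lintegral_enorm _).trans_eq ?_
      exact lintegral_congr fun y => by rw [enorm_eq_nnnorm, nnnorm_mul, ENNReal.coe_mul]
    have hf : AEMeasurable (fun y => (‖paKernel β γ x y‖₊ : ℝ≥0∞)) μ :=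
      (paKernel_measurable β γ x).enorm.aemeasurable
    have hcs := ENNReal.lintegral_mul_le_Lp_mul_Lq μ hconj hf hg2
    simp only [Pi.mul_apply] at hcs
    have hinner : (∫⁻ y, (‖paKernel β γ x y‖₊ : ℝ≥0∞) ^ (2:ℝ) ∂μ)
        ≤ ENNReal.ofReal (β ^ 2 * (x ^ (2*γ-2) * B) + β ^ 2 * (x ^ (-(2*γ)) * A)) := by
      have hpt : ∀ᵐ y ∂μ, (‖paKernel β γ x y‖₊ : ℝ≥0∞) ^ (2:ℝ)
          ≤ ENNReal.ofReal (β ^ 2 * x ^ (2*γ-2) * y ^ (-(2*γ)))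
            + ENNReal.ofReal (β ^ 2 * x ^ (-(2*γ)) * y ^ (2*γ-2)) := by
        filter_upwards [ae_restrict_mem measurableSet_Icc] with y hy
        have hy0 : 0 < y := lt_of_lt_of_le ha0 hy.1
        have hp0 : 0 ≤ paKernel β γ x y := paKernel_nonneg hβ.le hx0 hy0
        have heq : (‖paKernel β γ x y‖₊ : ℝ≥0∞) ^ (2:ℝ)
            = ENNReal.ofReal ((paKernel β γ x y) ^ 2) := by
          rw [← enorm_eq_nnnorm, Real.enorm_eq_ofReal hp0,
            ENNReal.ofReal_rpow_of_nonneg hp0 (by norm_num : (0:ℝ) ≤ 2),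
            show (2:ℝ) = ((2:ℕ):ℝ) by norm_num, Real.rpow_natCast]
        rw [heq]
        refine (ENNReal.ofReal_le_ofReal (paKernel_sq_le β γ hx0 hy0)).trans ?_
        rw [mul_add]
        refine ENNReal.ofReal_add_le.trans_eq ?_
        congr 1 <;> ring_nf
      refine (lintegral_mono_ae hpt).trans ?_
      have hm1 : Measurable fun y : ℝ => ENNReal.ofReal (β ^ 2 * x ^ (2*γ-2) * y ^ (-(2*γ))) :=
        ((measurable_id.pow_const _).const_mul _).ennreal_ofReal
      rw [lintegral_add_left hm1]
      have hint1 : MeasureTheory.Integrable (fun y : ℝ => β ^ 2 * x ^ (2*γ-2) * y ^ (-(2*γ))) μ :=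
        (rpow_integrableOn' _ ha0).const_mul _
      have hint2 : MeasureTheory.Integrable (fun y : ℝ => β ^ 2 * x ^ (-(2*γ)) * y ^ (2*γ-2)) μ :=
        (rpow_integrableOn' _ ha0).const_mul _
      have hnn1 : 0 ≤ᵐ[μ] fun y : ℝ => β ^ 2 * x ^ (2*γ-2) * y ^ (-(2*γ)) := by
        filter_upwards [ae_restrict_mem measurableSet_Icc] with y hy
        have : 0 < y := lt_of_lt_of_le ha0 hy.1
        positivity
      have hnn2 : 0 ≤ᵐ[μ] fun y : ℝ => β ^ 2 * x ^ (-(2*γ)) * y ^ (2*γ-2) := by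
        filter_upwards [ae_restrict_mem measurableSet_Icc] with y hy
        have : 0 < y := lt_of_lt_of_le ha0 hy.1
        positivity
      rw [← MeasureTheory.ofReal_integral_eq_lintegral_ofReal hint1 hnn1,
        ← MeasureTheory.ofReal_integral_eq_lintegral_ofReal hint2 hnn2]
      have hi1 : ∫ y, β ^ 2 * x ^ (2*γ-2) * y ^ (-(2*γ)) ∂μ = β ^ 2 * (x ^ (2*γ-2) * B) := by
        rw [hμ, integral_const_mul, hBdef]; ring
      have hi2 : ∫ y, β ^ 2 * x ^ (-(2*γ)) * y ^ (2*γ-2) ∂μ = β ^ 2 * (x ^ (-(2*γ)) * A) := by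
        rw [hμ, integral_const_mul, hAdef]; ring
      rw [hi1, hi2, ← ENNReal.ofReal_add (by positivity) (by positivity)]
    calc (‖∫ y in Set.Icc a 1, paKernel β γ x y * g y‖₊ : ℝ≥0∞)
        ≤ ∫⁻ y, (‖paKernel β γ x y‖₊ : ℝ≥0∞) * (‖g y‖₊ : ℝ≥0∞) ∂μ := hA1
      _ ≤ (∫⁻ y, (‖paKernel β γ x y‖₊ : ℝ≥0∞) ^ (2:ℝ) ∂μ) ^ (1/2:ℝ)
            * (∫⁻ y, (‖g y‖₊ : ℝ≥0∞) ^ (2:ℝ) ∂μ) ^ (1/2:ℝ) := hcs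
      _ ≤ ENNReal.ofReal (β ^ 2 * (x ^ (2*γ-2) * B) + β ^ 2 * (x ^ (-(2*γ)) * A)) ^ (1/2:ℝ)
            * G2 := by
          rw [hG2]
          exact mul_le_mul_left (ENNReal.rpow_le_rpow hinner (by norm_num)) _
  -- integrate the square of the bound
  have outer : (∫⁻ x, (‖∫ y in Set.Icc a 1, paKernel β γ x y * g y‖₊ : ℝ≥0∞) ^ (2:ℝ) ∂μ)
      ≤ ENNReal.ofReal (2 * β ^ 2 * A * B) * G2 ^ (2:ℝ) := by
    have step : ∀ᵐ x ∂μ, (‖∫ y in Set.Icc a 1, paKernel β γ x y * g y‖₊ : ℝ≥0∞) ^ (2:ℝ)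
        ≤ ENNReal.ofReal (β ^ 2 * (x ^ (2*γ-2) * B) + β ^ 2 * (x ^ (-(2*γ)) * A))
            * G2 ^ (2:ℝ) := by
      filter_upwards [ae_restrict_mem measurableSet_Icc] with x hx
      refine (ENNReal.rpow_le_rpow (key x hx) (by norm_num : (0:ℝ) ≤ 2)).trans_eq ?_
      rw [ENNReal.mul_rpow_of_nonneg _ _ (by norm_num : (0:ℝ) ≤ 2), ← ENNReal.rpow_mul]
      norm_num
    refine (lintegral_mono_ae step).trans ?_
    have hmR : Measurable fun x : ℝ =>
        ENNReal.ofReal (β ^ 2 * (x ^ (2*γ-2) * B) + β ^ 2 * (x ^ (-(2*γ)) * A)) := by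
      apply Measurable.ennreal_ofReal
      exact (((measurable_id.pow_const _).mul_const _).const_mul _).add
        (((measurable_id.pow_const _).mul_const _).const_mul _)
    rw [lintegral_mul_const _ hmR]
    refine mul_le_mul_left ?_ _
    have hint : MeasureTheory.Integrable
        (fun x : ℝ => β ^ 2 * (x ^ (2*γ-2) * B) + β ^ 2 * (x ^ (-(2*γ)) * A)) μ := by
      refine MeasureTheory.Integrable.add ?_ ?_
      · exact (((rpow_integrableOn' (2*γ-2) ha0).mul_const B).const_mul _)
      · exact (((rpow_integrableOn' (-(2*γ)) ha0).mul_const A).const_mul _)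
    have hnn : 0 ≤ᵐ[μ] fun x : ℝ => β ^ 2 * (x ^ (2*γ-2) * B) + β ^ 2 * (x ^ (-(2*γ)) * A) := by
      filter_upwards [ae_restrict_mem measurableSet_Icc] with x hx
      have hx0 : 0 < x := lt_of_lt_of_le ha0 hx.1
      have h1 : (0:ℝ) ≤ x ^ (2*γ-2) := Real.rpow_nonneg hx0.le _
      have h2 : (0:ℝ) ≤ x ^ (-(2*γ)) := Real.rpow_nonneg hx0.le _
      have := mul_nonneg h1 hB0
      have := mul_nonneg h2 hA0
      positivity
    rw [← MeasureTheory.ofReal_integral_eq_lintegral_ofReal hint hnn]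
    apply ENNReal.ofReal_le_ofReal
    have hi : ∫ x, (β ^ 2 * (x ^ (2*γ-2) * B) + β ^ 2 * (x ^ (-(2*γ)) * A)) ∂μ
        = 2 * β ^ 2 * A * B := by
      rw [MeasureTheory.integral_add
          ((rpow_integrableOn' (2*γ-2) ha0).mul_const B |>.const_mul _)
          ((rpow_integrableOn' (-(2*γ)) ha0).mul_const A |>.const_mul _),
        integral_const_mul, integral_const_mul,
        MeasureTheory.integral_mul_const, MeasureTheory.integral_mul_const,
        ← hAdef, ← hBdef]
      ring
    rw [hi]
  -- conclude
  have hTg : eLpNorm (fun x => ∫ y in Set.Icc a 1, paKernel β γ x y * g y) 2 μ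
      = (∫⁻ x, (‖∫ y in Set.Icc a 1, paKernel β γ x y * g y‖₊ : ℝ≥0∞) ^ (2:ℝ) ∂μ) ^ (1/2:ℝ) := by
    rw [eLpNorm_eq_lintegral_rpow_enorm_toReal (by norm_num) (by norm_num)]
    norm_num
    rfl
  rw [hTg, hGeq]
  set C : ℝ := β * Real.sqrt 2 / (2 * γ - 1) * a ^ (1/2 - γ) with hC
  have hC0 : 0 ≤ C := by
    have := Real.sqrt_nonneg 2
    have := Real.rpow_nonneg ha0.le (1/2 - γ)
    positivity
  have hCsq : 2 * β ^ 2 * A * B ≤ C ^ 2 := by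
    have hCsq' : C ^ 2 = 2 * β ^ 2 / (2 * γ - 1) ^ 2 * a ^ (1 - 2*γ) := by
      have h1 : Real.sqrt 2 * Real.sqrt 2 = 2 := Real.mul_self_sqrt (by norm_num)
      have h2 : a ^ (1/2 - γ) * a ^ (1/2 - γ) = a ^ (1 - 2*γ) := by
        rw [← Real.rpow_add ha0]; ring_nf
      calc C ^ 2 = β ^ 2 * (Real.sqrt 2 * Real.sqrt 2) / (2 * γ - 1) ^ 2
            * (a ^ (1/2 - γ) * a ^ (1/2 - γ)) := by
              have hne : (2 * γ - 1) ≠ 0 := ne_of_gt h2γ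
              rw [hC]; field_simp
        _ = 2 * β ^ 2 / (2 * γ - 1) ^ 2 * a ^ (1 - 2*γ) := by rw [h1, h2]; ring
    rw [hCsq']
    have hAB : A * B ≤ (1 / (2 * γ - 1)) * (a ^ (1 - 2*γ) / (2 * γ - 1)) :=
      mul_le_mul hAle hBle hB0 (by positivity)
    have h2β : (0:ℝ) ≤ 2 * β ^ 2 := by positivity
    calc 2 * β ^ 2 * A * B = 2 * β ^ 2 * (A * B) := by ring
      _ ≤ 2 * β ^ 2 * ((1 / (2 * γ - 1)) * (a ^ (1 - 2*γ) / (2 * γ - 1))) :=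
          mul_le_mul_of_nonneg_left hAB h2β
      _ = 2 * β ^ 2 / (2 * γ - 1) ^ 2 * a ^ (1 - 2*γ) := by field_simp
  calc (∫⁻ x, (‖∫ y in Set.Icc a 1, paKernel β γ x y * g y‖₊ : ℝ≥0∞) ^ (2:ℝ) ∂μ) ^ (1/2:ℝ)
      ≤ (ENNReal.ofReal (2 * β ^ 2 * A * B) * G2 ^ (2:ℝ)) ^ (1/2:ℝ) :=
        ENNReal.rpow_le_rpow outer (by norm_num)
    _ = ENNReal.ofReal (2 * β ^ 2 * A * B) ^ (1/2:ℝ) * G2 := by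
        rw [ENNReal.mul_rpow_of_nonneg _ _ (by norm_num : (0:ℝ) ≤ 1/2), ← ENNReal.rpow_mul]
        norm_num
    _ ≤ ENNReal.ofReal C * G2 := by
        refine mul_le_mul_left ?_ _
        have h2AB : (0:ℝ) ≤ 2 * β ^ 2 * A * B := by
          have := mul_nonneg (mul_nonneg (by positivity : (0:ℝ) ≤ 2 * β ^ 2) hA0) hB0
          linarith
        rw [ENNReal.ofReal_rpow_of_nonneg h2AB (by norm_num : (0:ℝ) ≤ 1/2)]
        apply ENNReal.ofReal_le_ofReal
        have : (2 * β ^ 2 * A * B) ^ (1/2:ℝ) ≤ (C ^ 2) ^ (1/2:ℝ) :=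
          Real.rpow_le_rpow h2AB hCsq (by norm_num)
        refine this.trans_eq ?_
        rw [show C ^ 2 = C ^ ((2:ℕ):ℝ) by rw [Real.rpow_natCast],
          ← Real.rpow_mul hC0]
        norm_num
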